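/- arXiv:1410.1188 — 2 statements merged into one kernel-verified Lean document; each statement's English description precedes it below -/
import Mathlib

section
/- For every n ≥ 1, the Lie algebra homomorphism ψ : 𝔢_{A_{2n+1}} → 𝔢_{A_{2n+2}} determined by sending each generator e_i of 𝔢_{A_{2n+1}} to the generator ẽ_i of 𝔢_{A_{2n+2}} (for i = 1, …, 2n+1) is injective. -/
noncomputable section

open FreeLieAlgebra Matrix

abbrev FL (n : ℕ) : Type := FreeLieAlgebra ℂ (Fin n)

/-- Defining relations of the type `A` electrical Lie algebra (generators are `0`-indexed:
index `i` corresponds to the generator `e_{i+1}`). -/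
def relA (n : ℕ) : Set (FL n) :=
  {x | ∃ i j : Fin n, ((i : ℕ) + 2 ≤ (j : ℕ) ∨ (j : ℕ) + 2 ≤ (i : ℕ)) ∧
        x = ⁅of ℂ i, of ℂ j⁆} ∪
  {x | ∃ i j : Fin n, ((i : ℕ) + 1 = (j : ℕ) ∨ (j : ℕ) + 1 = (i : ℕ)) ∧
        x = ⁅of ℂ i, ⁅of ℂ i, of ℂ j⁆⁆ + (2 : ℂ) • of ℂ i}

/-- The electrical Lie algebra of type `A_n`. -/
abbrev eA (n : ℕ) : Type := FL n ⧸ LieSubmodule.lieSpan ℂ (FL n) (relA n)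

/-- The generator `e_{i+1}` of `eA n`. -/
def gA (n : ℕ) (i : Fin n) : eA n :=
  LieSubmodule.Quotient.mk' (LieSubmodule.lieSpan ℂ (FL n) (relA n)) (of ℂ i)

namespace EProof

/-- The quotient map as a Lie algebra homomorphism. -/
def mkh (m : ℕ) : FL m →ₗ⁅ℂ⁆ eA m :=
  { (LieSubmodule.lieSpan ℂ (FL m) (relA m)).toSubmodule.mkQ with
    map_lie' := rfl }

lemma mkh_surjective (m : ℕ) : Function.Surjective (mkh m) :=
  Submodule.Quotient.mk_surjective _

lemma mkh_of (m : ℕ) (i : Fin m) : mkh m (of ℂ i) = gA m i := rfl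

lemma mkh_rel (m : ℕ) {x : FL m} (hx : x ∈ relA m) : mkh m x = 0 := by
  have h2 : x ∈ LieSubmodule.lieSpan ℂ (FL m) (relA m) := LieSubmodule.subset_lieSpan hx
  exact (Submodule.Quotient.mk_eq_zero _).2 h2

lemma gA_rel0 (m : ℕ) (i j : Fin m) (h : (i : ℕ) + 2 ≤ (j : ℕ) ∨ (j : ℕ) + 2 ≤ (i : ℕ)) :
    ⁅gA m i, gA m j⁆ = 0 := by
  have := mkh_rel m (Or.inl ⟨i, j, h, rfl⟩)
  rw [LieHom.map_lie] at this
  simpa [mkh_of] using this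

lemma gA_rel1 (m : ℕ) (i j : Fin m) (h : (i : ℕ) + 1 = (j : ℕ) ∨ (j : ℕ) + 1 = (i : ℕ)) :
    ⁅gA m i, ⁅gA m i, gA m j⁆⁆ = -((2 : ℂ) • gA m i) := by
  have h2 := mkh_rel m (Or.inr ⟨i, j, h, rfl⟩)
  rw [map_add, LieHom.map_lie, LieHom.map_lie, map_smul, mkh_of, mkh_of] at h2
  linear_combination (norm := module) h2

/-- Lift a map on generators satisfying the relations to a Lie algebra hom on `eA m`. -/
def eLift {m : ℕ} {L : Type} [LieRing L] [LieAlgebra ℂ L] (f : Fin m → L)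
    (h0 : ∀ i j : Fin m, ((i : ℕ) + 2 ≤ (j : ℕ) ∨ (j : ℕ) + 2 ≤ (i : ℕ)) → ⁅f i, f j⁆ = 0)
    (h1 : ∀ i j : Fin m, ((i : ℕ) + 1 = (j : ℕ) ∨ (j : ℕ) + 1 = (i : ℕ)) →
      ⁅f i, ⁅f i, f j⁆⁆ + (2 : ℂ) • f i = 0) :
    eA m →ₗ⁅ℂ⁆ L := by
  refine
    { Submodule.liftQ (LieSubmodule.lieSpan ℂ (FL m) (relA m)).toSubmodule
        (FreeLieAlgebra.lift ℂ f).toLinearMap ?_ with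
      map_lie' := ?_ }
  · have hle : LieSubmodule.lieSpan ℂ (FL m) (relA m) ≤ (FreeLieAlgebra.lift ℂ f).ker := by
      rw [LieSubmodule.lieSpan_le]
      rintro x (⟨i, j, hc, rfl⟩ | ⟨i, j, hc, rfl⟩) <;>
        simp only [SetLike.mem_coe, LieHom.mem_ker, LieHom.map_lie, map_add,
          map_smul, lift_of_apply]
      · exact h0 i j hc
      · exact h1 i j hc
    intro x hx
    exact (LieHom.mem_ker).1 (hle hx)
  · rintro ⟨x⟩ ⟨y⟩
    exact (FreeLieAlgebra.lift ℂ f).map_lie x y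

@[simp] lemma eLift_gA {m : ℕ} {L : Type} [LieRing L] [LieAlgebra ℂ L] (f : Fin m → L)
    (h0 : ∀ i j : Fin m, ((i : ℕ) + 2 ≤ (j : ℕ) ∨ (j : ℕ) + 2 ≤ (i : ℕ)) → ⁅f i, f j⁆ = 0)
    (h1 : ∀ i j : Fin m, ((i : ℕ) + 1 = (j : ℕ) ∨ (j : ℕ) + 1 = (i : ℕ)) →
      ⁅f i, ⁅f i, f j⁆⁆ + (2 : ℂ) • f i = 0) (i : Fin m) :
    eLift f h0 h1 (gA m i) = f i := by
  show eLift f h0 h1 (mkh m (of ℂ i)) = f i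
  have : (eLift f h0 h1) (mkh m (of ℂ i)) = (FreeLieAlgebra.lift ℂ f) (of ℂ i) := rfl
  rw [this, lift_of_apply]

/-- `eA m` is generated by the `gA m i` as a Lie algebra. -/
lemma eA_gen {m : ℕ} (K : LieSubalgebra ℂ (eA m)) (h : ∀ i, gA m i ∈ K) (x : eA m) :
    x ∈ K := by
  let F : FL m →ₗ⁅ℂ⁆ K := FreeLieAlgebra.lift ℂ (fun i => (⟨gA m i, h i⟩ : K))
  have key : ∀ y : FL m, mkh m y = (K.incl.comp F) y := by
    intro y
    apply LieHom.congr_fun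
    apply FreeLieAlgebra.hom_ext
    intro i
    show mkh m (of ℂ i) = K.incl (F (of ℂ i))
    rw [mkh_of]
    show gA m i = (F (of ℂ i) : eA m)
    rw [lift_of_apply]
  obtain ⟨y, rfl⟩ := mkh_surjective m x
  rw [key y]
  exact (F y).2

end EProof

namespace EProof

variable {m : ℕ}

-- specialized bracket lemmas (the generic ones do not `rw` on the quotient due to
-- instance mismatches)
lemma leib (x y z : eA m) : ⁅x, ⁅y, z⁆⁆ = ⁅⁅x, y⁆, z⁆ + ⁅y, ⁅x, z⁆⁆ := leibniz_lie x y z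

lemma liel (x y z : eA m) : ⁅⁅x, y⁆, z⁆ = ⁅x, ⁅y, z⁆⁆ - ⁅y, ⁅x, z⁆⁆ := lie_lie x y z

lemma lskew (x y : eA m) : ⁅x, y⁆ = -⁅y, x⁆ := (lie_skew x y).symm

lemma lzero (x : eA m) : ⁅x, (0 : eA m)⁆ = 0 := lie_zero x

lemma zlie (x : eA m) : ⁅(0 : eA m), x⁆ = 0 := zero_lie x

lemma lnege (x y : eA m) : ⁅x, -y⁆ = -⁅x, y⁆ := lie_neg x y

lemma nlie (x y : eA m) : ⁅-x, y⁆ = -⁅x, y⁆ := neg_lie x y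

lemma lsmul (t : ℂ) (x y : eA m) : ⁅x, t • y⁆ = t • ⁅x, y⁆ := lie_smul t x y

lemma slie (t : ℂ) (x y : eA m) : ⁅t • x, y⁆ = t • ⁅x, y⁆ := smul_lie t x y

lemma lself (x : eA m) : ⁅x, x⁆ = 0 := lie_self x

lemma ladd (x y z : eA m) : ⁅x, y + z⁆ = ⁅x, y⁆ + ⁅x, z⁆ := lie_add x y z

lemma lsub (x y z : eA m) : ⁅x, y - z⁆ = ⁅x, y⁆ - ⁅x, z⁆ := lie_sub x y z

/-- `e k`, out-of-range indices give `0`. -/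
def Eg (m : ℕ) (k : ℕ) : eA m := if h : k < m then gA m ⟨k, h⟩ else 0

lemma rel0E (k l : ℕ) (h : k + 2 ≤ l ∨ l + 2 ≤ k) : ⁅Eg m k, Eg m l⁆ = 0 := by
  unfold Eg
  split_ifs with h1 h2 h2
  · exact gA_rel0 m ⟨k, h1⟩ ⟨l, h2⟩ h
  · exact lzero _
  · exact zlie _
  · exact zlie _

lemma rel1E (k l : ℕ) (hk : k < m) (hl : l < m) (h : k + 1 = l ∨ l + 1 = k) :
    ⁅Eg m k, ⁅Eg m k, Eg m l⁆⁆ = -((2 : ℂ) • Eg m k) := by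
  unfold Eg
  rw [dif_pos hk, dif_pos hl]
  exact gA_rel1 m ⟨k, hk⟩ ⟨l, hl⟩ h

/-- The interval bracket words `c_{i,j} = [e_i, [e_{i+1}, ⋯ , e_j]]`. -/
def cw (m : ℕ) (i j : ℕ) : eA m :=
  if h : i < j then ⁅Eg m i, cw m (i + 1) j⁆ else Eg m j
termination_by j - i
decreasing_by omega

lemma cw_diag (i : ℕ) : cw m i i = Eg m i := by rw [cw, dif_neg (lt_irrefl i)]

lemma cw_step {i j : ℕ} (h : i < j) : cw m i j = ⁅Eg m i, cw m (i + 1) j⁆ := by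
  rw [cw, dif_pos h]

lemma cw_succ (i : ℕ) : cw m i (i + 1) = ⁅Eg m i, Eg m (i + 1)⁆ := by
  rw [cw_step (by omega), cw_diag]

-- L1
lemma ww1 : ∀ (d k i : ℕ), k + 2 ≤ i → ⁅Eg m k, cw m i (i + d)⁆ = 0 := by
  intro d
  induction d with
  | zero =>
    intro k i h
    simp only [Nat.add_zero]
    rw [cw_diag]; exact rel0E k i (Or.inl (by omega))
  | succ d ih =>
    intro k i h
    have e1 : i + (d + 1) = (i + 1) + d := by omega
    rw [e1, cw_step (by omega), leib, rel0E k i (Or.inl h), zlie,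
      ih k (i + 1) (by omega), lzero, add_zero]

-- L2
lemma ww2 : ∀ (d k i : ℕ), i + d + 2 ≤ k → ⁅Eg m k, cw m i (i + d)⁆ = 0 := by
  intro d
  induction d with
  | zero =>
    intro k i h
    simp only [Nat.add_zero]
    rw [cw_diag]; exact rel0E k i (Or.inr (by omega))
  | succ d ih =>
    intro k i h
    have e1 : i + (d + 1) = (i + 1) + d := by omega
    rw [e1, cw_step (by omega), leib, rel0E k i (Or.inr (by omega)), zlie,
      ih k (i + 1) (by omega), lzero, add_zero]

-- L3 : [e_{j+1}, c_{i,j}] = -c_{i,j+1}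
lemma ww3 : ∀ (d i : ℕ), ⁅Eg m (i + d + 1), cw m i (i + d)⁆ = -cw m i (i + d + 1) := by
  intro d
  induction d with
  | zero =>
    intro i
    simp only [Nat.add_zero]
    rw [cw_diag, cw_succ, ← lskew]
  | succ d ih =>
    intro i
    have e1 : i + (d + 1) = (i + 1) + d := by omega
    rw [e1, cw_step (show i < (i+1)+d by omega), leib,
      rel0E (i + 1 + d + 1) i (Or.inr (by omega)), zlie, zero_add, ih (i + 1),
      lnege]
    have e2 : (i + 1) + d + 1 = i + (d + 1) + 1 := by omega
    rw [e2, ← cw_step (by omega)]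

-- L4 : [e_i, c_{i,j}] = 0 for j ≥ i+2
lemma ww4 : ∀ (d i : ℕ), i + d + 2 < m → ⁅Eg m i, cw m i (i + d + 2)⁆ = 0 := by
  intro d i hm
  have h1 : ⁅Eg m i, cw m (i + 2) (i + d + 2)⁆ = 0 := by
    have := ww1 (m := m) d i (i + 2) (by omega)
    rwa [show (i+2) + d = i + d + 2 by omega] at this
  have h3 : ⁅Eg m i, cw m (i + 1) (i + d + 2)⁆
      = ⁅⁅Eg m i, Eg m (i + 1)⁆, cw m (i + 2) (i + d + 2)⁆ := by
    rw [cw_step (show i + 1 < i + d + 2 by omega), leib, h1, lzero, add_zero]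
  rw [cw_step (show i < i + d + 2 by omega), h3, leib,
    rel1E i (i + 1) (by omega) (by omega) (Or.inl rfl), h1, lzero, add_zero,
    nlie, slie, h1, smul_zero, neg_zero]

-- L8 : [e_{i+1}, c_{i,i+1}] = 2 e_{i+1}
lemma ww8 (i : ℕ) (h : i + 1 < m) : ⁅Eg m (i + 1), cw m i (i + 1)⁆ = (2 : ℂ) • Eg m (i + 1) := by
  rw [cw_succ, lskew (Eg m i), lnege,
    rel1E (i + 1) i (by omega) (by omega) (Or.inr rfl), neg_neg]

-- L10 : [e_i, c_{i,i+1}] = -2 e_i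
lemma ww10 (i : ℕ) (h : i + 1 < m) : ⁅Eg m i, cw m i (i + 1)⁆ = -((2 : ℂ) • Eg m i) := by
  rw [cw_succ]
  exact rel1E i (i + 1) (by omega) (by omega) (Or.inl rfl)

lemma two_smul_cancel {x y : eA m} (h : (2 : ℂ) • x = (2 : ℂ) • y) : x = y :=
  smul_right_injective (eA m) (two_ne_zero) h

-- L5' : [e_{i+1}, c_{i,i+2}] = c_{i+1,i+2} - c_{i,i+1}
lemma ww5' (i : ℕ) (h : i + 2 < m) :
    ⁅Eg m (i + 1), cw m i (i + 2)⁆ = cw m (i + 1) (i + 2) - cw m i (i + 1) := by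
  have hv : cw m (i + 1) (i + 2) = ⁅Eg m (i + 1), Eg m (i + 2)⁆ := by
    rw [show i + 2 = (i+1) + 1 by omega, cw_succ]
  have hc : cw m i (i + 2) = ⁅Eg m i, cw m (i + 1) (i + 2)⁆ := cw_step (by omega)
  -- [w, e_{i+1}] = 2 e_{i+1}  where w = [e_{i+1}, e_i]
  have hw1 : ⁅⁅Eg m (i+1), Eg m i⁆, Eg m (i+1)⁆ = (2:ℂ) • Eg m (i+1) := by
    rw [lskew, rel1E (i + 1) i (by omega) (by omega) (Or.inr rfl), neg_neg]
  -- [w, e_{i+2}] = -c_{i,i+2}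
  have hw2 : ⁅⁅Eg m (i+1), Eg m i⁆, Eg m (i+2)⁆ = -cw m i (i + 2) := by
    rw [liel, rel0E i (i+2) (Or.inl (by omega)), lzero, zero_sub, hc, hv]
  -- [e_{i+1}, v] = -2 e_{i+1}
  have hv2 : ⁅Eg m (i+1), cw m (i+1) (i+2)⁆ = -((2:ℂ) • Eg m (i+1)) := by
    rw [hv]
    exact rel1E (i + 1) (i + 2) (by omega) (by omega) (Or.inl (by omega))
  -- main computation
  have main : ⁅Eg m (i + 1), cw m i (i + 2)⁆
      = ((2:ℂ) • cw m (i+1) (i+2) - ⁅Eg m (i + 1), cw m i (i + 2)⁆)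
        - (2:ℂ) • cw m i (i + 1) := by
    calc ⁅Eg m (i + 1), cw m i (i + 2)⁆
        = ⁅Eg m (i+1), ⁅Eg m i, cw m (i + 1) (i + 2)⁆⁆ := by rw [← hc]
      _ = ⁅⁅Eg m (i+1), Eg m i⁆, cw m (i + 1) (i + 2)⁆
            + ⁅Eg m i, ⁅Eg m (i+1), cw m (i + 1) (i + 2)⁆⁆ := leib _ _ _
      _ = ⁅⁅Eg m (i+1), Eg m i⁆, ⁅Eg m (i+1), Eg m (i+2)⁆⁆
            - (2:ℂ) • cw m i (i + 1) := by
          rw [hv2, lnege, lsmul, ← cw_succ, hv]; abel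
      _ = (⁅⁅⁅Eg m (i+1), Eg m i⁆, Eg m (i+1)⁆, Eg m (i+2)⁆
            + ⁅Eg m (i+1), ⁅⁅Eg m (i+1), Eg m i⁆, Eg m (i+2)⁆⁆)
            - (2:ℂ) • cw m i (i + 1) := by
          rw [leib ⁅Eg m (i+1), Eg m i⁆ (Eg m (i+1)) (Eg m (i+2))]
      _ = ((2:ℂ) • cw m (i+1) (i+2) - ⁅Eg m (i + 1), cw m i (i + 2)⁆)
            - (2:ℂ) • cw m i (i + 1) := by
          rw [hw1, hw2, slie, lnege, hv]; abel
  apply two_smul_cancel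
  linear_combination (norm := module) main

-- [w, e_{i+1}] = 2 e_{i+1} where w = [e_{i+1}, e_i]
lemma hbr (i : ℕ) (h : i + 1 < m) :
    ⁅⁅Eg m (i+1), Eg m i⁆, Eg m (i+1)⁆ = (2:ℂ) • Eg m (i+1) := by
  rw [lskew, rel1E (i + 1) i (by omega) (by omega) (Or.inr rfl), neg_neg]

-- L5 : [e_{i+1}, c_{i,j}] = c_{i+1,j} for j ≥ i+3
lemma ww5 : ∀ (d i : ℕ), i + d + 3 < m → ⁅Eg m (i+1), cw m i (i+d+3)⁆ = cw m (i+1) (i+d+3) := by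
  intro d i hm
  set j := i + d + 3 with hj
  have h4 : ⁅Eg m (i+1), cw m (i+1) j⁆ = 0 := by
    have := ww4 (m := m) d (i + 1) (by omega)
    rwa [show (i+1) + d + 2 = j by omega] at this
  have h1 : ⁅Eg m i, cw m (i+2) j⁆ = 0 := by
    have := ww1 (m := m) (d+1) i (i + 2) (by omega)
    rwa [show (i+2) + (d+1) = j by omega] at this
  have hstep1 : cw m i j = ⁅Eg m i, cw m (i+1) j⁆ := cw_step (by omega)
  have hstep2 : cw m (i+1) j = ⁅Eg m (i+1), cw m (i+2) j⁆ := cw_step (by omega)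
  have hw2 : ⁅⁅Eg m (i+1), Eg m i⁆, cw m (i+2) j⁆ = -cw m i j := by
    rw [liel, h1, lzero, zero_sub, ← hstep2, ← hstep1]
  have main : ⁅Eg m (i+1), cw m i j⁆
      = (2:ℂ) • cw m (i+1) j - ⁅Eg m (i+1), cw m i j⁆ := by
    calc ⁅Eg m (i+1), cw m i j⁆
        = ⁅Eg m (i+1), ⁅Eg m i, cw m (i+1) j⁆⁆ := by rw [← hstep1]
      _ = ⁅⁅Eg m (i+1), Eg m i⁆, cw m (i+1) j⁆
            + ⁅Eg m i, ⁅Eg m (i+1), cw m (i+1) j⁆⁆ := leib _ _ _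
      _ = ⁅⁅Eg m (i+1), Eg m i⁆, ⁅Eg m (i+1), cw m (i+2) j⁆⁆ := by
          rw [h4, lzero, add_zero, ← hstep2]
      _ = ⁅⁅⁅Eg m (i+1), Eg m i⁆, Eg m (i+1)⁆, cw m (i+2) j⁆
            + ⁅Eg m (i+1), ⁅⁅Eg m (i+1), Eg m i⁆, cw m (i+2) j⁆⁆ := leib _ _ _
      _ = (2:ℂ) • cw m (i+1) j - ⁅Eg m (i+1), cw m i j⁆ := by
          rw [hbr i (by omega), hw2, slie, lnege, ← hstep2]
          abel
  apply two_smul_cancel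
  linear_combination (norm := module) main

-- L9 : [e_j, c_{i,j}] = 0 for j ≥ i+2
lemma ww9 : ∀ (d i : ℕ), i + d + 2 < m → ⁅Eg m (i+d+2), cw m i (i+d+2)⁆ = 0 := by
  intro d
  induction d with
  | zero =>
    intro i hm
    rw [show i + 0 + 2 = i + 2 by omega, cw_step (show i < i + 2 by omega), leib,
      rel0E (i+2) i (Or.inr (by omega)), zlie, zero_add]
    have h8 : ⁅Eg m (i+2), cw m (i+1) (i+2)⁆ = (2:ℂ) • Eg m (i+2) := by
      have := ww8 (m := m) (i+1) (by omega)
      rwa [show (i+1) + 1 = i + 2 by omega] at this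
    rw [h8, lsmul, rel0E i (i+2) (Or.inl (by omega)), smul_zero]
  | succ d ih =>
    intro i hm
    rw [show i + (d+1) + 2 = i + d + 3 by omega,
      cw_step (show i < i + d + 3 by omega), leib,
      rel0E (i+d+3) i (Or.inr (by omega)), zlie, zero_add]
    have := ih (i+1) (by omega)
    rw [show (i+1) + d + 2 = i + d + 3 by omega] at this
    rw [this, lzero]

-- L7 : [e_{j-1}, c_{i,j}] = -c_{i,j-1} for j-1 ≥ i+2
lemma ww7 : ∀ (d i : ℕ), i + d + 3 < m → ⁅Eg m (i+d+2), cw m i (i+d+3)⁆ = -cw m i (i+d+2) := by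
  intro d
  induction d with
  | zero =>
    intro i hm
    rw [show i + 0 + 2 = i + 2 by omega, show i + 0 + 3 = i + 3 by omega,
      cw_step (show i < i + 3 by omega), leib,
      rel0E (i+2) i (Or.inr (by omega)), zlie, zero_add]
    have h5 : ⁅Eg m (i+2), cw m (i+1) (i+3)⁆ = cw m (i+2) (i+3) - cw m (i+1) (i+2) := by
      have := ww5' (m := m) (i+1) (by omega)
      rwa [show (i+1) + 1 = i + 2 by omega, show (i+1) + 2 = i + 3 by omega] at this
    rw [h5, lsub]
    have h1 : ⁅Eg m i, cw m (i+2) (i+3)⁆ = 0 := by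
      have := ww1 (m := m) 1 i (i+2) (by omega)
      rwa [show (i+2) + 1 = i + 3 by omega] at this
    rw [h1, zero_sub, ← cw_step (show i < i + 2 by omega)]
  | succ d ih =>
    intro i hm
    rw [show i + (d+1) + 2 = i + d + 3 by omega, show i + (d+1) + 3 = i + d + 4 by omega,
      cw_step (show i < i + d + 4 by omega), leib,
      rel0E (i+d+3) i (Or.inr (by omega)), zlie, zero_add]
    have := ih (i+1) (by omega)
    rw [show (i+1) + d + 2 = i + d + 3 by omega, show (i+1) + d + 3 = i + d + 4 by omega]
      at this
    rw [this, lnege, ← cw_step (show i < i + d + 3 by omega)]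

-- L6 : [e_k, c_{i,j}] = 0 for i+2 ≤ k ≤ j-2
lemma ww6 : ∀ (t d i : ℕ), i + t + d + 4 < m → ⁅Eg m (i+t+2), cw m i (i+t+d+4)⁆ = 0 := by
  intro t
  induction t with
  | zero =>
    intro d i hm
    rw [show i + 0 + 2 = i + 2 by omega, show i + 0 + d + 4 = i + d + 4 by omega,
      cw_step (show i < i + d + 4 by omega), leib,
      rel0E (i+2) i (Or.inr (by omega)), zlie, zero_add]
    have h5 : ⁅Eg m (i+2), cw m (i+1) (i+d+4)⁆ = cw m (i+2) (i+d+4) := by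
      have := ww5 (m := m) d (i+1) (by omega)
      rwa [show (i+1) + 1 = i + 2 by omega, show (i+1) + d + 3 = i + d + 4 by omega] at this
    rw [h5]
    have := ww1 (m := m) (d+2) i (i+2) (by omega)
    rwa [show (i+2) + (d+2) = i + d + 4 by omega] at this
  | succ t ih =>
    intro d i hm
    rw [show i + (t+1) + 2 = i + t + 3 by omega, show i + (t+1) + d + 4 = i + t + d + 5 by omega,
      cw_step (show i < i + t + d + 5 by omega), leib,
      rel0E (i+t+3) i (Or.inr (by omega)), zlie, zero_add]
    have := ih d (i+1) (by omega)
    rw [show (i+1) + t + 2 = i + t + 3 by omega, show (i+1) + t + d + 4 = i + t + d + 5 by omega]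
      at this
    rw [this, lzero]

end EProof

namespace EProof

variable {m : ℕ}

lemma alie (x y z : eA m) : ⁅x + y, z⁆ = ⁅x, z⁆ + ⁅y, z⁆ := add_lie x y z

lemma Eg_val (i : Fin m) : Eg m (i : ℕ) = gA m i := by
  rw [Eg, dif_pos i.isLt]

/-- The spanning family, indexed by pairs. -/
def Cfam (m : ℕ) : Fin m × Fin m → eA m :=
  fun p => if (p.1 : ℕ) ≤ (p.2 : ℕ) then cw m p.1 p.2 else 0

def Ssp (m : ℕ) : Submodule ℂ (eA m) := Submodule.span ℂ (Set.range (Cfam m))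

lemma cw_mem_Ssp {i j : ℕ} (hij : i ≤ j) (hj : j < m) : cw m i j ∈ Ssp m := by
  apply Submodule.subset_span
  exact ⟨(⟨i, by omega⟩, ⟨j, hj⟩), by simp [Cfam, hij]⟩

lemma Eg_mem_Ssp {k : ℕ} (hk : k < m) : Eg m k ∈ Ssp m := by
  rw [← cw_diag]; exact cw_mem_Ssp le_rfl hk

lemma bracket_cw_mem (k : ℕ) (hk : k < m) (i j : ℕ) (hij : i ≤ j) (hj : j < m) :
    ⁅Eg m k, cw m i j⁆ ∈ Ssp m := by
  by_cases h1 : k + 2 ≤ i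
  · obtain ⟨d, rfl⟩ : ∃ d, j = i + d := ⟨j - i, by omega⟩
    rw [ww1 d k i h1]; exact zero_mem _
  by_cases h2 : k + 1 = i
  · subst h2
    rw [← cw_step (show k < j by omega)]
    exact cw_mem_Ssp (by omega) hj
  by_cases h3 : k = i
  · subst h3
    by_cases h4 : j = k
    · subst h4; rw [cw_diag, lself]; exact zero_mem _
    by_cases h5 : j = k + 1
    · subst h5
      rw [ww10 k (by omega)]
      exact neg_mem (Submodule.smul_mem _ _ (Eg_mem_Ssp (by omega)))
    · obtain ⟨d, rfl⟩ : ∃ d, j = k + d + 2 := ⟨j - k - 2, by omega⟩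
      rw [ww4 d k hj]; exact zero_mem _
  by_cases h6 : k = i + 1
  · subst h6
    by_cases h7a : j = i
    · subst h7a
      have h3' := ww3 (m := m) 0 j
      simp only [Nat.add_zero] at h3'
      rw [h3']
      exact neg_mem (cw_mem_Ssp (by omega) hk)
    by_cases h7 : j = i + 1
    · subst h7
      rw [ww8 i (by omega)]
      exact Submodule.smul_mem _ _ (Eg_mem_Ssp (by omega))
    by_cases h8 : j = i + 2
    · subst h8
      rw [ww5' i hj]
      exact sub_mem (cw_mem_Ssp (by omega) hj) (cw_mem_Ssp (by omega) (by omega))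
    · obtain ⟨d, rfl⟩ : ∃ d, j = i + d + 3 := ⟨j - i - 3, by omega⟩
      rw [ww5 d i hj]
      exact cw_mem_Ssp (by omega) hj
  by_cases h9 : k + 2 ≤ j
  · obtain ⟨t, rfl⟩ : ∃ t, k = i + t + 2 := ⟨k - i - 2, by omega⟩
    obtain ⟨d, rfl⟩ : ∃ d, j = i + t + d + 4 := ⟨j - (i + t + 2) - 2, by omega⟩
    rw [ww6 t d i hj]; exact zero_mem _
  by_cases h10 : k + 1 = j
  · obtain ⟨d, rfl⟩ : ∃ d, k = i + d + 2 := ⟨k - i - 2, by omega⟩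
    obtain rfl : j = i + d + 3 := by omega
    rw [ww7 d i hj]
    exact neg_mem (cw_mem_Ssp (by omega) (by omega))
  by_cases h11 : k = j
  · obtain ⟨d, rfl⟩ : ∃ d, j = i + d + 2 := ⟨j - i - 2, by omega⟩
    subst h11
    rw [ww9 d i hj]; exact zero_mem _
  by_cases h12 : k = j + 1
  · obtain ⟨d, rfl⟩ : ∃ d, j = i + d := ⟨j - i, by omega⟩
    subst h12
    rw [ww3 d i]
    exact neg_mem (cw_mem_Ssp (by omega) (by omega))
  · obtain ⟨d, rfl⟩ : ∃ d, j = i + d := ⟨j - i, by omega⟩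
    rw [ww2 d k i (by omega)]; exact zero_mem _

lemma bracket_mem_Ssp (k : ℕ) (hk : k < m) {s : eA m} (hs : s ∈ Ssp m) :
    ⁅Eg m k, s⁆ ∈ Ssp m := by
  induction hs using Submodule.span_induction with
  | mem x hx =>
    obtain ⟨p, rfl⟩ := hx
    by_cases hp : (p.1 : ℕ) ≤ (p.2 : ℕ)
    · rw [Cfam, if_pos hp]
      exact bracket_cw_mem k hk _ _ hp p.2.isLt
    · rw [Cfam, if_neg hp, lzero]; exact zero_mem _
  | zero => rw [lzero]; exact zero_mem _
  | add x y _ _ hx hy => rw [ladd]; exact add_mem hx hy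
  | smul t x _ hx => rw [lsmul]; exact Submodule.smul_mem _ _ hx

/-- The auxiliary subalgebra used to prove that the `cw` span everything. -/
def Usub (m : ℕ) : LieSubalgebra ℂ (eA m) :=
  { carrier := {x | x ∈ Ssp m ∧ ∀ s ∈ Ssp m, ⁅x, s⁆ ∈ Ssp m}
    add_mem' := by
      rintro x y ⟨hx1, hx2⟩ ⟨hy1, hy2⟩
      exact ⟨add_mem hx1 hy1, fun s hs => by
        rw [alie]; exact add_mem (hx2 s hs) (hy2 s hs)⟩
    zero_mem' := ⟨zero_mem _, fun s hs => by rw [zlie]; exact zero_mem _⟩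
    smul_mem' := by
      rintro t x ⟨hx1, hx2⟩
      exact ⟨Submodule.smul_mem _ _ hx1, fun s hs => by
        rw [slie]; exact Submodule.smul_mem _ _ (hx2 s hs)⟩
    lie_mem' := by
      rintro x y ⟨hx1, hx2⟩ ⟨hy1, hy2⟩
      refine ⟨hx2 y hy1, fun s hs => ?_⟩
      rw [liel]
      exact sub_mem (hx2 _ (hy2 s hs)) (hy2 _ (hx2 s hs)) }

lemma mem_Ssp (x : eA m) : x ∈ Ssp m := by
  have hU : ∀ i : Fin m, gA m i ∈ Usub m := by
    intro i
    constructor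
    · rw [← Eg_val]; exact Eg_mem_Ssp i.isLt
    · intro s hs
      rw [← Eg_val]
      exact bracket_mem_Ssp _ i.isLt hs
  exact (eA_gen (Usub m) hU x).1

end EProof

namespace EProof

/-- Matrix units with out-of-range indices giving `0`. -/
def Ee (q a b : ℕ) : Matrix (Fin q) (Fin q) ℂ :=
  if h : a < q ∧ b < q then single ⟨a, h.1⟩ ⟨b, h.2⟩ 1 else 0

variable {q : ℕ}

lemma Ee_mul_same {b : ℕ} (hb : b < q) (a d : ℕ) : Ee q a b * Ee q b d = Ee q a d := by
  unfold Ee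
  by_cases ha : a < q <;> by_cases hd : d < q
  · rw [dif_pos ⟨ha, hb⟩, dif_pos ⟨hb, hd⟩, dif_pos ⟨ha, hd⟩, single_mul_single_same, one_mul]
  · rw [dif_neg (show ¬(b < q ∧ d < q) from fun hc => hd hc.2), mul_zero,
      dif_neg (show ¬(a < q ∧ d < q) from fun hc => hd hc.2)]
  · rw [dif_neg (show ¬(a < q ∧ b < q) from fun hc => ha hc.1), zero_mul,
      dif_neg (show ¬(a < q ∧ d < q) from fun hc => ha hc.1)]
  · rw [dif_neg (show ¬(a < q ∧ b < q) from fun hc => ha hc.1), zero_mul,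
      dif_neg (show ¬(a < q ∧ d < q) from fun hc => ha hc.1)]

lemma Ee_mul_ne {b c : ℕ} (hbc : b ≠ c) (a d : ℕ) : Ee q a b * Ee q c d = 0 := by
  unfold Ee
  split_ifs with h1 h2 h2
  · exact Matrix.single_mul_single_of_ne (h := fun h => hbc (congrArg Fin.val h)) ..
  · rw [mul_zero]
  · rw [zero_mul]
  · rw [zero_mul]

lemma Ee_apply (a b : ℕ) (r s : Fin q) :
    Ee q a b r s = if a = (r : ℕ) ∧ b = (s : ℕ) then 1 else 0 := by
  unfold Ee
  split_ifs with h1 h2 h2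
  · rw [show (⟨a, h1.1⟩ : Fin q) = r from Fin.ext h2.1,
      show (⟨b, h1.2⟩ : Fin q) = s from Fin.ext h2.2]
    exact single_apply_same r s 1
  · exact single_apply_of_ne _ _ _ _ _
      (fun hc => h2 ⟨congrArg Fin.val hc.1, congrArg Fin.val hc.2⟩)
  · exfalso
    exact h1 ⟨h2.1 ▸ r.isLt, h2.2 ▸ s.isLt⟩
  · exact Matrix.zero_apply r s

/-- The generator matrices. -/
def Am (q i : ℕ) : Matrix (Fin q) (Fin q) ℂ := Ee q (i+1) i + Ee q (i+1) (i+2)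

lemma Am_sq (i : ℕ) : Am q i * Am q i = 0 := by
  simp only [Am, add_mul, mul_add, Ee_mul_ne (show i ≠ i + 1 by omega),
    Ee_mul_ne (show i + 2 ≠ i + 1 by omega), add_zero, zero_add]

lemma Am_far {i j : ℕ} (h : i + 2 ≤ j ∨ j + 2 ≤ i) : ⁅Am q i, Am q j⁆ = 0 := by
  rw [Ring.lie_def]
  simp only [Am, add_mul, mul_add,
    Ee_mul_ne (show i ≠ j + 1 by omega), Ee_mul_ne (show i + 2 ≠ j + 1 by omega),
    Ee_mul_ne (show j ≠ i + 1 by omega), Ee_mul_ne (show j + 2 ≠ i + 1 by omega),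
    add_zero, zero_add, sub_self]

lemma Am_mul_succ (i : ℕ) (h : i + 2 < q) :
    Am q i * Am q (i+1) = Ee q (i+1) (i+1) + Ee q (i+1) (i+3) := by
  simp only [Am, add_mul, mul_add,
    Ee_mul_ne (show i ≠ i + 2 by omega), Ee_mul_same (show i + 2 < q from h),
    zero_add, add_zero]

lemma Am_succ_mul (i : ℕ) (h : i + 1 < q) :
    Am q (i+1) * Am q i = Ee q (i+2) i + Ee q (i+2) (i+2) := by
  simp only [Am, add_mul, mul_add,
    Ee_mul_ne (show i + 3 ≠ i + 1 by omega), Ee_mul_same (show i + 1 < q from h),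
    zero_add, add_zero]

lemma Am_adj (i : ℕ) (h : i + 2 < q) :
    ⁅Am q i, ⁅Am q i, Am q (i+1)⁆⁆ + (2 : ℂ) • Am q i = 0 := by
  have hXYX : Am q i * Am q (i+1) * Am q i = Am q i := by
    rw [Am_mul_succ i h]
    simp only [Am, add_mul, mul_add, Ee_mul_same (show i + 1 < q by omega),
      Ee_mul_ne (show i + 3 ≠ i + 1 by omega), add_zero]
  have expand : ⁅Am q i, ⁅Am q i, Am q (i+1)⁆⁆
      = Am q i * Am q i * Am q (i+1) + Am q (i+1) * (Am q i * Am q i)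
        - (Am q i * Am q (i+1) * Am q i + Am q i * Am q (i+1) * Am q i) := by
    simp only [Ring.lie_def]
    noncomm_ring
  rw [expand, Am_sq, hXYX, zero_mul, mul_zero, zero_add, zero_sub, two_smul]
  abel

lemma Am_adj' (i : ℕ) (h : i + 2 < q) :
    ⁅Am q (i+1), ⁅Am q (i+1), Am q i⁆⁆ + (2 : ℂ) • Am q (i+1) = 0 := by
  have hXYX : Am q (i+1) * Am q i * Am q (i+1) = Am q (i+1) := by
    rw [Am_succ_mul i (by omega)]
    simp only [Am, add_mul, mul_add, Ee_mul_same (show i + 2 < q from h),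
      Ee_mul_ne (show i ≠ i + 2 by omega), zero_add]
  have expand : ⁅Am q (i+1), ⁅Am q (i+1), Am q i⁆⁆
      = Am q (i+1) * Am q (i+1) * Am q i + Am q i * (Am q (i+1) * Am q (i+1))
        - (Am q (i+1) * Am q i * Am q (i+1) + Am q (i+1) * Am q i * Am q (i+1)) := by
    simp only [Ring.lie_def]
    noncomm_ring
  rw [expand, Am_sq, hXYX, zero_mul, mul_zero, zero_add, zero_sub, two_smul]
  abel

/-- Closed form for the images of the words `cw`. -/
def Mc (q i j : ℕ) : Matrix (Fin q) (Fin q) ℂ :=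
  if i = j then Am q i
  else Ee q (i+1) j + Ee q (i+1) (j+2) + ((-1 : ℂ))^(j-i) • (Ee q (j+1) i + Ee q (j+1) (i+2))

lemma Mc_step (d i : ℕ) (h : i + d + 3 < q) :
    ⁅Am q i, Mc q (i+1) (i+d+1)⁆ = Mc q i (i+d+1) := by
  cases d with
  | zero =>
    rw [show i + 0 + 1 = i + 1 by omega] at *
    rw [Mc, if_pos rfl, Ring.lie_def, Am_mul_succ i (by omega), Am_succ_mul i (by omega),
      Mc, if_neg (show ¬ i = i + 1 by omega), show i + 1 - i = 1 by omega]
    rw [pow_one, neg_smul, one_smul]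
    abel
  | succ d =>
    rw [show i + (d+1) + 1 = i + d + 2 by omega] at *
    have hne : ¬ (i + 1 = i + d + 2) := by omega
    have hs : (-1 : ℂ)^(i + d + 2 - i) = -((-1 : ℂ)^(i + d + 2 - (i+1))) := by
      rw [show i + d + 2 - i = (i + d + 2 - (i+1)) + 1 by omega, pow_succ]
      ring
    rw [Mc, if_neg hne, Ring.lie_def]
    rw [Mc, if_neg (show ¬ i = i + d + 2 by omega), hs]
    simp only [Am, mul_add, add_mul, mul_smul_comm, smul_mul_assoc,
      Ee_mul_ne (show i ≠ i + 2 by omega),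
      Ee_mul_same (show i + 2 < q by omega),
      Ee_mul_ne (show i ≠ i + d + 3 by omega),
      Ee_mul_ne (show i + 2 ≠ i + d + 3 by omega),
      Ee_mul_ne (show i + d + 2 ≠ i + 1 by omega),
      Ee_mul_ne (show i + d + 4 ≠ i + 1 by omega),
      Ee_mul_same (show i + 1 < q by omega),
      Ee_mul_ne (show i + 3 ≠ i + 1 by omega),
      smul_zero, add_zero, zero_add]
    rw [smul_add, neg_smul, neg_smul]
    abel

end EProof

namespace EProof

variable {q : ℕ}

lemma Mc_entry {k l i j : ℕ} (hkl : k ≤ l) (hij : i ≤ j)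
    (hiq : i + 1 < q) (hjq : j + 2 < q) :
    Mc q k l ⟨i+1, hiq⟩ ⟨j+2, hjq⟩
      = (if k = i ∧ l = j then 1 else 0) + (if k = i ∧ l = j + 2 then 1 else 0) := by
  by_cases hd : k = l
  · subst hd
    rw [Mc, if_pos rfl]
    simp only [Am, Matrix.add_apply, Ee_apply]
    split_ifs <;> first | (exfalso; omega) | norm_num
  · rw [Mc, if_neg hd]
    simp only [Matrix.add_apply, Matrix.smul_apply, Ee_apply, smul_eq_mul]
    split_ifs <;> first | (exfalso; omega) | norm_num

lemma indep (m : ℕ) (hq : m + 2 ≤ q) (μ : Fin m × Fin m → ℂ)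
    (hsum : ∑ p : Fin m × Fin m,
      μ p • (if (p.1 : ℕ) ≤ (p.2 : ℕ) then Mc q p.1 p.2 else 0) = 0) :
    ∀ (t j i : ℕ) (hij : i ≤ j) (hj : j < m), m - j ≤ t →
      μ (⟨i, by omega⟩, ⟨j, hj⟩) = 0 := by
  intro t
  induction t with
  | zero => intro j i hij hj ht; omega
  | succ t ih =>
    intro j i hij hj ht
    have hiq : i + 1 < q := by omega
    have hjq : j + 2 < q := by omega
    -- read off the (i+1, j+2) entry of the sum
    have entry : ∑ p : Fin m × Fin m,
        (μ p • (if (p.1 : ℕ) ≤ (p.2 : ℕ) then Mc q p.1 p.2 else 0)) ⟨i+1, hiq⟩ ⟨j+2, hjq⟩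
        = 0 := by
      rw [← Matrix.sum_apply]
      rw [hsum]
      rfl
    by_cases hj2 : j + 2 < m
    · have hterm : ∀ p : Fin m × Fin m,
          (μ p • (if (p.1 : ℕ) ≤ (p.2 : ℕ) then Mc q p.1 p.2 else 0)) ⟨i+1, hiq⟩ ⟨j+2, hjq⟩
          = (if p = (⟨i, by omega⟩, ⟨j, hj⟩) then μ p else 0)
            + (if p = (⟨i, by omega⟩, ⟨j+2, hj2⟩) then μ p else 0) := by
        intro p
        by_cases hp : (p.1 : ℕ) ≤ (p.2 : ℕ)
        · rw [if_pos hp, Matrix.smul_apply, Mc_entry hp hij hiq hjq, smul_eq_mul, mul_add,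
            mul_ite, mul_one, mul_zero, mul_ite, mul_one, mul_zero]
          have h1 : ((p.1 : ℕ) = i ∧ (p.2 : ℕ) = j)
              ↔ p = ((⟨i, by omega⟩ : Fin m), (⟨j, hj⟩ : Fin m)) := by
            rw [Prod.ext_iff, Fin.ext_iff, Fin.ext_iff]
          have h2 : ((p.1 : ℕ) = i ∧ (p.2 : ℕ) = j + 2)
              ↔ p = ((⟨i, by omega⟩ : Fin m), (⟨j+2, hj2⟩ : Fin m)) := by
            rw [Prod.ext_iff, Fin.ext_iff, Fin.ext_iff]
          rw [if_congr h1 rfl rfl, if_congr h2 rfl rfl]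
        · rw [if_neg hp, smul_zero, Matrix.zero_apply, if_neg, if_neg]
          · norm_num
          · intro hpe; apply hp; rw [hpe]; simp; omega
          · intro hpe; apply hp; rw [hpe]; simp; omega
      rw [Finset.sum_congr rfl (fun p _ => hterm p), Finset.sum_add_distrib,
        Finset.sum_ite_eq' Finset.univ _ μ, Finset.sum_ite_eq' Finset.univ _ μ,
        if_pos (Finset.mem_univ _), if_pos (Finset.mem_univ _)] at entry
      have hIH := ih (j+2) i (by omega) hj2 (by omega)
      rw [hIH, add_zero] at entry
      exact entry
    · have hterm : ∀ p : Fin m × Fin m,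
          (μ p • (if (p.1 : ℕ) ≤ (p.2 : ℕ) then Mc q p.1 p.2 else 0)) ⟨i+1, hiq⟩ ⟨j+2, hjq⟩
          = (if p = (⟨i, by omega⟩, ⟨j, hj⟩) then μ p else 0) := by
        intro p
        by_cases hp : (p.1 : ℕ) ≤ (p.2 : ℕ)
        · rw [if_pos hp, Matrix.smul_apply, Mc_entry hp hij hiq hjq, smul_eq_mul, mul_add,
            mul_ite, mul_one, mul_zero, mul_ite, mul_one, mul_zero]
          have h1 : ((p.1 : ℕ) = i ∧ (p.2 : ℕ) = j)
              ↔ p = ((⟨i, by omega⟩ : Fin m), (⟨j, hj⟩ : Fin m)) := by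
            rw [Prod.ext_iff, Fin.ext_iff, Fin.ext_iff]
          rw [if_congr h1 rfl rfl, if_neg (show ¬((p.1 : ℕ) = i ∧ (p.2 : ℕ) = j + 2) by
            rintro ⟨-, h⟩; have := p.2.isLt; omega), add_zero]
        · rw [if_neg hp, smul_zero, Matrix.zero_apply, if_neg]
          intro hpe; apply hp; rw [hpe]; simp; omega
      rw [Finset.sum_congr rfl (fun p _ => hterm p),
        Finset.sum_ite_eq' Finset.univ _ μ, if_pos (Finset.mem_univ _)] at entry
      exact entry

end EProof

namespace EProof

attribute [local instance] LieRing.ofAssociativeRing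

/-- The canonical map `eA (2n+1) → eA (2n+2)`. -/
def ψd (n : ℕ) : eA (2*n+1) →ₗ⁅ℂ⁆ eA (2*n+2) :=
  eLift (fun i => gA (2*n+2) i.castSucc)
    (by
      intro i j h
      apply gA_rel0
      simpa using h)
    (by
      intro i j h
      rw [gA_rel1 (2*n+2) i.castSucc j.castSucc (by simpa using h)]
      abel)

/-- The matrix representation of `eA (2n+2)`. -/
def Φd (n : ℕ) : eA (2*n+2) →ₗ⁅ℂ⁆ Matrix (Fin (2*n+4)) (Fin (2*n+4)) ℂ :=
  eLift (fun i => Am (2*n+4) (i : ℕ))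
    (fun _ _ h => Am_far h)
    (by
      intro i j h
      show ⁅Am (2*n+4) (i : ℕ), ⁅Am (2*n+4) (i : ℕ), Am (2*n+4) (j : ℕ)⁆⁆
          + (2 : ℂ) • Am (2*n+4) (i : ℕ) = 0
      rcases h with h | h
      · rw [show (j : ℕ) = (i : ℕ) + 1 from h.symm]
        exact Am_adj (i : ℕ) (by omega)
      · rw [show (i : ℕ) = (j : ℕ) + 1 from h.symm]
        exact Am_adj' (j : ℕ) (by omega))

/-- The composite representation of `eA (2n+1)`. -/
def Φt (n : ℕ) : eA (2*n+1) →ₗ⁅ℂ⁆ Matrix (Fin (2*n+4)) (Fin (2*n+4)) ℂ :=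
  (Φd n).comp (ψd n)

lemma Φt_gA (n : ℕ) (i : Fin (2*n+1)) : Φt n (gA _ i) = Am (2*n+4) (i : ℕ) := by
  rw [Φt, LieHom.comp_apply, ψd, eLift_gA, Φd, eLift_gA, Fin.coe_castSucc]

lemma Φt_Eg (n : ℕ) (k : ℕ) (hk : k < 2*n+1) : Φt n (Eg _ k) = Am (2*n+4) k := by
  rw [Eg, dif_pos hk, Φt_gA]

lemma Φt_cw (n : ℕ) :
    ∀ d i, i + d < 2*n+1 → Φt n (cw _ i (i+d)) = Mc (2*n+4) i (i+d) := by
  intro d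
  induction d with
  | zero =>
    intro i h
    simp only [Nat.add_zero]
    rw [cw_diag, Φt_Eg n i (by omega), Mc, if_pos rfl]
  | succ d ih =>
    intro i h
    rw [cw_step (show i < i + (d+1) by omega)]
    have hli : Φt n ⁅Eg (2*n+1) i, cw (2*n+1) (i+1) (i+(d+1))⁆
        = ⁅Φt n (Eg (2*n+1) i), Φt n (cw (2*n+1) (i+1) (i+(d+1)))⁆ := (Φt n).map_lie _ _
    rw [hli, Φt_Eg n i (by omega)]
    have e1 : i + (d+1) = (i+1) + d := by omega
    rw [e1, ih (i+1) (by omega)]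
    have hstep := Mc_step (q := 2*n+4) d i (by omega)
    rwa [show i + d + 1 = (i+1) + d by omega] at hstep

lemma Φt_Cfam (n : ℕ) (p : Fin (2*n+1) × Fin (2*n+1)) :
    Φt n (Cfam (2*n+1) p)
      = if (p.1 : ℕ) ≤ (p.2 : ℕ) then Mc (2*n+4) p.1 p.2 else 0 := by
  by_cases hp : (p.1 : ℕ) ≤ (p.2 : ℕ)
  · rw [Cfam, if_pos hp, if_pos hp]
    obtain ⟨d, hd⟩ : ∃ d, (p.2 : ℕ) = (p.1 : ℕ) + d := ⟨p.2 - p.1, by omega⟩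
    rw [hd]
    exact Φt_cw n d p.1 (by have := p.2.isLt; omega)
  · rw [Cfam, if_neg hp, if_neg hp, map_zero]

lemma ψd_ker (n : ℕ) (x : eA (2*n+1)) (hx : ψd n x = 0) : x = 0 := by
  have hΦ : Φt n x = 0 := by rw [Φt, LieHom.comp_apply, hx, map_zero]
  obtain ⟨μ, hμ⟩ := (Submodule.mem_span_range_iff_exists_fun ℂ).1 (mem_Ssp x)
  have hsum : ∑ p : Fin (2*n+1) × Fin (2*n+1),
      μ p • (if (p.1 : ℕ) ≤ (p.2 : ℕ) then Mc (2*n+4) p.1 p.2 else 0) = 0 := by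
    have h2 : (Φt n).toLinearMap (∑ p, μ p • Cfam (2*n+1) p) = 0 := by
      show Φt n (∑ p, μ p • Cfam (2*n+1) p) = 0
      rw [hμ, hΦ]
    rw [map_sum] at h2
    have h3 : ∀ p : Fin (2*n+1) × Fin (2*n+1),
        μ p • (if (p.1 : ℕ) ≤ (p.2 : ℕ) then Mc (2*n+4) p.1 p.2 else 0)
          = (Φt n).toLinearMap (μ p • Cfam (2*n+1) p) := by
      intro p
      rw [LinearMap.map_smul]
      congr 1
      exact (Φt_Cfam n p).symm
    rw [Finset.sum_congr rfl (fun p _ => h3 p)]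
    exact h2
  have hzero : ∀ p : Fin (2*n+1) × Fin (2*n+1), μ p • Cfam (2*n+1) p = 0 := by
    intro p
    by_cases hp : (p.1 : ℕ) ≤ (p.2 : ℕ)
    · have hind := indep (2*n+1) (by omega) μ hsum (2*n+1) (p.2 : ℕ) (p.1 : ℕ)
        hp p.2.isLt (by omega)
      have hpp : ((⟨(p.1 : ℕ), by omega⟩ : Fin (2*n+1)),
          (⟨(p.2 : ℕ), p.2.isLt⟩ : Fin (2*n+1))) = p := by
        ext <;> rfl
      rw [hpp] at hind
      rw [hind, zero_smul]
    · rw [Cfam, if_neg hp, smul_zero]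
  rw [← hμ, Finset.sum_congr rfl (fun p _ => hzero p), Finset.sum_const_zero]

lemma ψd_injective (n : ℕ) : Function.Injective (ψd n) := by
  intro a b hab
  have h0 : ψd n (a - b) = 0 := by
    rw [map_sub, hab, sub_self]
  have := ψd_ker n (a - b) h0
  exact sub_eq_zero.mp this

end EProof


theorem stmt1 (n : ℕ) (hn : 1 ≤ n) :
    ∃ ψ : eA (2 * n + 1) →ₗ⁅ℂ⁆ eA (2 * n + 2),
      (∀ i : Fin (2 * n + 1), ψ (gA (2 * n + 1) i) = gA (2 * n + 2) i.castSucc) ∧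
      Function.Injective ψ := by
  exact ⟨EProof.ψd n, fun i => by rw [EProof.ψd, EProof.eLift_gA], EProof.ψd_injective n⟩
end
end

section
/- For every n ≥ 0, the set of matrices in the symplectic Lie algebra sp_{2n+2}(ℂ) whose (n+1)-st column is zero is closed under the matrix Lie bracket, hence forms a Lie subalgebra of sp_{2n+2}(ℂ), and this Lie subalgebra has complex dimension (n+1)(2n+1). -/
noncomputable section

open FreeLieAlgebra Matrix

attribute [local instance 100] LieRing.ofAssociativeRing

/-- The matrix `J = [[0, I_m], [-I_m, 0]]`. -/
def Jmat (m : ℕ) : Matrix (Fin m ⊕ Fin m) (Fin m ⊕ Fin m) ℂ :=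
  Matrix.fromBlocks 0 1 (-1) 0

/-- The symplectic Lie algebra `sp_{2m}(ℂ)` of matrices `M` with `Mᵀ J + J M = 0`. -/
def sp (m : ℕ) : LieSubalgebra ℂ (Matrix (Fin m ⊕ Fin m) (Fin m ⊕ Fin m) ℂ) :=
  skewAdjointMatricesLieSubalgebra (Jmat m)

namespace Stmt3Aux

abbrev ι (n : ℕ) :=
  (Fin (n + 1) × Fin n) ⊕
    ({p : Fin (n + 1) × Fin (n + 1) // p.1 ≤ p.2} ⊕ {p : Fin n × Fin n // p.1 ≤ p.2})

/-- symmetrized function of coordinates on ordered pairs -/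
def symFun {m : ℕ} (c : {p : Fin m × Fin m // p.1 ≤ p.2} → ℂ) (i j : Fin m) : ℂ :=
  if h : i ≤ j then c ⟨(i, j), h⟩ else c ⟨(j, i), le_of_not_ge h⟩

lemma symFun_comm {m : ℕ} (c : {p : Fin m × Fin m // p.1 ≤ p.2} → ℂ) (i j : Fin m) :
    symFun c i j = symFun c j i := by
  unfold symFun
  split_ifs with h1 h2 h2
  · obtain rfl := le_antisymm h1 h2; rfl
  · rfl
  · rfl
  · exact absurd (le_of_not_ge h1) h2

variable (n : ℕ)

def Ablk (c : ι n → ℂ) : Matrix (Fin (n + 1)) (Fin (n + 1)) ℂ := fun i j =>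
  if h : (j : ℕ) < n then c (.inl (i, ⟨j, h⟩)) else 0

def Bblk (c : ι n → ℂ) : Matrix (Fin (n + 1)) (Fin (n + 1)) ℂ := fun i j =>
  symFun (fun p => c (.inr (.inl p))) i j

def Cblk (c : ι n → ℂ) : Matrix (Fin (n + 1)) (Fin (n + 1)) ℂ := fun i j =>
  if hi : (i : ℕ) < n then
    if hj : (j : ℕ) < n then symFun (fun p => c (.inr (.inr p))) ⟨i, hi⟩ ⟨j, hj⟩ else 0
  else 0

def gam (c : ι n → ℂ) : Matrix (Fin (n + 1) ⊕ Fin (n + 1)) (Fin (n + 1) ⊕ Fin (n + 1)) ℂ :=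
  Matrix.fromBlocks (Ablk n c) (Bblk n c) (Cblk n c) (-(Ablk n c)ᵀ)

lemma Bblk_symm (c : ι n → ℂ) : (Bblk n c)ᵀ = Bblk n c := by
  ext i j
  simp only [Matrix.transpose_apply, Bblk]
  exact symFun_comm _ j i

lemma Cblk_symm (c : ι n → ℂ) : (Cblk n c)ᵀ = Cblk n c := by
  ext i j
  simp only [Matrix.transpose_apply, Cblk]
  split_ifs with h1 h2 h3 h4 <;> try rfl
  exact symFun_comm _ _ _

lemma gam_add (c d : ι n → ℂ) : gam n (c + d) = gam n c + gam n d := by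
  ext i j
  cases i <;> cases j <;>
    simp only [gam, Ablk, Bblk, Cblk, symFun, fromBlocks_apply₁₁, fromBlocks_apply₁₂,
      fromBlocks_apply₂₁, fromBlocks_apply₂₂, Matrix.add_apply, Matrix.neg_apply,
      Matrix.transpose_apply, Pi.add_apply] <;>
    split_ifs <;>
    first
      | rfl
      | exact add_comm _ _
      | (simp; exact add_comm _ _)
      | simp

lemma gam_smul (r : ℂ) (c : ι n → ℂ) : gam n (r • c) = r • gam n c := by
  ext i j
  cases i <;> cases j <;>
    simp only [gam, Ablk, Bblk, Cblk, symFun, fromBlocks_apply₁₁, fromBlocks_apply₁₂,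
      fromBlocks_apply₂₁, fromBlocks_apply₂₂, Matrix.smul_apply, Matrix.neg_apply,
      Matrix.transpose_apply, Pi.smul_apply, smul_eq_mul] <;>
    split_ifs <;>
    first
      | rfl
      | simp
      | exact (mul_neg _ _).symm

lemma gam_mem_sp (c : ι n → ℂ) : gam n c ∈ sp (n + 1) := by
  rw [sp, mem_skewAdjointMatricesLieSubalgebra, mem_skewAdjointMatricesSubmodule]
  show (gam n c)ᵀ * Jmat (n + 1) = Jmat (n + 1) * -gam n c
  rw [gam, Jmat]
  rw [fromBlocks_transpose, fromBlocks_neg, fromBlocks_multiply, fromBlocks_multiply]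
  simp only [mul_zero, mul_one, zero_mul, one_mul, zero_add, add_zero, mul_neg, neg_mul,
    neg_neg, neg_zero, Matrix.mul_zero, Matrix.mul_one, Matrix.zero_mul, Matrix.one_mul,
    Matrix.mul_neg, Matrix.neg_mul, transpose_neg, transpose_transpose]
  rw [fromBlocks_inj]
  refine ⟨?_, ?_, ?_, ?_⟩ <;>
    first
      | rfl
      | rw [Cblk_symm]
      | rw [Bblk_symm]
      | simp [Cblk_symm, Bblk_symm]

lemma gam_col (c : ι n → ℂ) : ∀ i, gam n c i (Sum.inl (Fin.last n)) = 0 := by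
  intro i
  cases i with
  | inl i =>
    show Ablk n c i (Fin.last n) = 0
    unfold Ablk
    rw [dif_neg]
    simp
  | inr i =>
    show Cblk n c i (Fin.last n) = 0
    unfold Cblk
    split_ifs with h1 h2
    · exact absurd h2 (by simp)
    · rfl
    · rfl

/-- coordinate extraction -/
def pim (M : Matrix (Fin (n + 1) ⊕ Fin (n + 1)) (Fin (n + 1) ⊕ Fin (n + 1)) ℂ) : ι n → ℂ :=
  fun x =>
    match x with
    | .inl (i, j) => M (Sum.inl i) (Sum.inl j.castSucc)
    | .inr (.inl ⟨(i, j), _⟩) => M (Sum.inl i) (Sum.inr j)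
    | .inr (.inr ⟨(i, j), _⟩) => M (Sum.inr i.castSucc) (Sum.inl j.castSucc)

lemma pim_gam (c : ι n → ℂ) : pim n (gam n c) = c := by
  funext x
  match x with
  | .inl (i, j) =>
    show Ablk n c i j.castSucc = _
    unfold Ablk
    have hj : ((j.castSucc : Fin (n + 1)) : ℕ) < n := by simpa using j.isLt
    rw [dif_pos hj]
    have : (⟨((j.castSucc : Fin (n + 1)) : ℕ), hj⟩ : Fin n) = j := by
      ext; simp
    rw [this]
  | .inr (.inl ⟨(i, j), h⟩) =>
    show Bblk n c i j = _
    unfold Bblk symFun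
    rw [dif_pos h]
  | .inr (.inr ⟨(i, j), h⟩) =>
    show Cblk n c i.castSucc j.castSucc = _
    unfold Cblk
    have hi : ((i.castSucc : Fin (n + 1)) : ℕ) < n := by simpa using i.isLt
    have hj : ((j.castSucc : Fin (n + 1)) : ℕ) < n := by simpa using j.isLt
    rw [dif_pos hi, dif_pos hj]
    unfold symFun
    have hii : (⟨((i.castSucc : Fin (n + 1)) : ℕ), hi⟩ : Fin n) = i := by ext; simp
    have hjj : (⟨((j.castSucc : Fin (n + 1)) : ℕ), hj⟩ : Fin n) = j := by ext; simp
    rw [hii, hjj, dif_pos h]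

lemma gam_pim (M : Matrix (Fin (n + 1) ⊕ Fin (n + 1)) (Fin (n + 1) ⊕ Fin (n + 1)) ℂ)
    (hsp : M ∈ sp (n + 1)) (hcol : ∀ i, M i (Sum.inl (Fin.last n)) = 0) :
    gam n (pim n M) = M := by
  rw [sp, mem_skewAdjointMatricesLieSubalgebra, mem_skewAdjointMatricesSubmodule] at hsp
  replace hsp : Mᵀ * Jmat (n + 1) = Jmat (n + 1) * -M := hsp
  rw [← fromBlocks_toBlocks M, Jmat] at hsp
  rw [fromBlocks_transpose, fromBlocks_neg, fromBlocks_multiply, fromBlocks_multiply] at hsp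
  simp only [mul_zero, mul_one, zero_mul, one_mul, zero_add, add_zero, mul_neg, neg_mul,
    neg_neg, neg_zero, Matrix.mul_zero, Matrix.mul_one, Matrix.zero_mul, Matrix.one_mul,
    Matrix.mul_neg, Matrix.neg_mul] at hsp
  rw [fromBlocks_inj] at hsp
  obtain ⟨hC, hAD, hD, hB⟩ := hsp
  have hCsymm : ∀ i j, M (Sum.inr i) (Sum.inl j) = M (Sum.inr j) (Sum.inl i) := by
    intro i j
    have h1 := congrFun (congrFun hC i) j
    simp only [Matrix.neg_apply, Matrix.transpose_apply, toBlocks₂₁, of_apply, neg_inj] at h1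
    exact h1.symm
  have hBsymm : ∀ i j, M (Sum.inl i) (Sum.inr j) = M (Sum.inl j) (Sum.inr i) := by
    intro i j
    have h1 := congrFun (congrFun hB j) i
    simp only [Matrix.transpose_apply, toBlocks₁₂, of_apply] at h1
    exact h1
  have hDA : ∀ i j, M (Sum.inr i) (Sum.inr j) = -M (Sum.inl j) (Sum.inl i) := by
    intro i j
    have h1 := congrFun (congrFun hAD i) j
    simp only [Matrix.transpose_apply, Matrix.neg_apply, toBlocks₁₁, toBlocks₂₂, of_apply] at h1
    rw [eq_neg_iff_add_eq_zero] at h1 ⊢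
    linear_combination h1
  have hlast : ∀ (j : Fin (n + 1)), ¬ ((j : ℕ) < n) → j = Fin.last n := by
    intro j h
    ext
    simpa using le_antisymm (Nat.lt_succ_iff.mp j.isLt) (not_lt.mp h)
  ext i j
  cases i with
  | inl i =>
    cases j with
    | inl j =>
      show Ablk n (pim n M) i j = _
      unfold Ablk
      by_cases h : (j : ℕ) < n
      · rw [dif_pos h]
        show M (Sum.inl i) (Sum.inl (Fin.castSucc ⟨(j : ℕ), h⟩)) = _
        have : Fin.castSucc (⟨(j : ℕ), h⟩ : Fin n) = j := by ext; simp
        rw [this]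
      · rw [dif_neg h, hlast j h]
        exact (hcol (Sum.inl i)).symm
    | inr j =>
      show Bblk n (pim n M) i j = _
      unfold Bblk symFun
      by_cases h : i ≤ j
      · rw [dif_pos h]
        rfl
      · rw [dif_neg h]
        exact hBsymm j i
  | inr i =>
    cases j with
    | inl j =>
      show Cblk n (pim n M) i j = _
      unfold Cblk
      by_cases hi : (i : ℕ) < n
      · rw [dif_pos hi]
        by_cases hj : (j : ℕ) < n
        · rw [dif_pos hj]
          unfold symFun
          have hii : Fin.castSucc (⟨(i : ℕ), hi⟩ : Fin n) = i := by ext; simp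
          have hjj : Fin.castSucc (⟨(j : ℕ), hj⟩ : Fin n) = j := by ext; simp
          by_cases hle : (⟨(i : ℕ), hi⟩ : Fin n) ≤ ⟨(j : ℕ), hj⟩
          · rw [dif_pos hle]
            show M (Sum.inr (Fin.castSucc ⟨(i : ℕ), hi⟩))
                (Sum.inl (Fin.castSucc ⟨(j : ℕ), hj⟩)) = _
            rw [hii, hjj]
          · rw [dif_neg hle]
            show M (Sum.inr (Fin.castSucc ⟨(j : ℕ), hj⟩))
                (Sum.inl (Fin.castSucc ⟨(i : ℕ), hi⟩)) = _
            rw [hii, hjj]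
            exact (hCsymm i j).symm
        · rw [dif_neg hj, hlast j hj]
          exact (hcol (Sum.inr i)).symm
      · rw [dif_neg hi, hlast i hi, hCsymm _ j]
        exact (hcol (Sum.inr j)).symm
    | inr j =>
      show -(Ablk n (pim n M))ᵀ i j = _
      simp only [Matrix.neg_apply, Matrix.transpose_apply]
      unfold Ablk
      by_cases h : (i : ℕ) < n
      · rw [dif_pos h]
        show -M (Sum.inl j) (Sum.inl (Fin.castSucc ⟨(i : ℕ), h⟩)) = _
        have : Fin.castSucc (⟨(i : ℕ), h⟩ : Fin n) = i := by ext; simp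
        rw [this, ← hDA]
      · rw [dif_neg h, hDA, hlast i h, hcol (Sum.inl j), neg_zero]

def gamLin : (ι n → ℂ) →ₗ[ℂ] Matrix (Fin (n + 1) ⊕ Fin (n + 1)) (Fin (n + 1) ⊕ Fin (n + 1)) ℂ where
  toFun := gam n
  map_add' := gam_add n
  map_smul' := gam_smul n

/-- The submodule of matrices with vanishing distinguished column. -/
def colZero : Submodule ℂ (Matrix (Fin (n + 1) ⊕ Fin (n + 1)) (Fin (n + 1) ⊕ Fin (n + 1)) ℂ) where
  carrier := {A | ∀ i, A i (Sum.inl (Fin.last n)) = 0}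
  add_mem' := by intro a b ha hb i; simp [Matrix.add_apply, ha i, hb i]
  zero_mem' := by intro i; rfl
  smul_mem' := by intro r a ha i; simp [Matrix.smul_apply, ha i]

def T : Submodule ℂ (Matrix (Fin (n + 1) ⊕ Fin (n + 1)) (Fin (n + 1) ⊕ Fin (n + 1)) ℂ) :=
  (sp (n + 1)).toSubmodule ⊓ colZero n

lemma mem_T_iff (M : Matrix (Fin (n + 1) ⊕ Fin (n + 1)) (Fin (n + 1) ⊕ Fin (n + 1)) ℂ) :
    M ∈ T n ↔ M ∈ sp (n + 1) ∧ ∀ i, M i (Sum.inl (Fin.last n)) = 0 := by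
  rw [T, Submodule.mem_inf]
  exact Iff.rfl

def SLie : LieSubalgebra ℂ (Matrix (Fin (n + 1) ⊕ Fin (n + 1)) (Fin (n + 1) ⊕ Fin (n + 1)) ℂ) :=
  { T n with
    lie_mem' := by
      intro x y hx hy
      rw [Submodule.mem_carrier, SetLike.mem_coe, mem_T_iff] at hx hy ⊢
      refine ⟨(sp (n + 1)).lie_mem hx.1 hy.1, ?_⟩
      intro i
      rw [Ring.lie_def]
      simp [Matrix.sub_apply, Matrix.mul_apply, hx.2, hy.2] }

lemma card_le_pairs (m : ℕ) :
    Fintype.card {p : Fin m × Fin m // p.1 ≤ p.2} = m * (m + 1) / 2 := by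
  rw [← Fintype.card_congr (Sym2.sortEquiv (α := Fin m)), Sym2.card]
  rw [Fintype.card_fin, Nat.choose_two_right]
  simp [Nat.mul_comm]

lemma card_ι : Fintype.card (ι n) = (n + 1) * (2 * n + 1) := by
  have h1 : 2 ∣ (n + 1) * (n + 1 + 1) := (Nat.even_mul_succ_self (n + 1)).two_dvd
  have h2 : 2 ∣ n * (n + 1) := (Nat.even_mul_succ_self n).two_dvd
  simp only [ι, Fintype.card_sum, Fintype.card_prod, Fintype.card_fin, card_le_pairs]
  have e1 : (n + 1) * (n + 1 + 1) / 2 * 2 = (n + 1) * (n + 1 + 1) := Nat.div_mul_cancel h1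
  have e2 : n * (n + 1) / 2 * 2 = n * (n + 1) := Nat.div_mul_cancel h2
  nlinarith [e1, e2]

end Stmt3Aux

open Stmt3Aux

theorem stmt3 (n : ℕ) :
    ∃ S : LieSubalgebra ℂ
        (Matrix (Fin (n + 1) ⊕ Fin (n + 1)) (Fin (n + 1) ⊕ Fin (n + 1)) ℂ),
      (S : Set (Matrix (Fin (n + 1) ⊕ Fin (n + 1)) (Fin (n + 1) ⊕ Fin (n + 1)) ℂ)) =
        {A | A ∈ sp (n + 1) ∧ ∀ i, A i (Sum.inl (Fin.last n)) = 0} ∧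
      Module.rank ℂ S = ((n + 1) * (2 * n + 1) : ℕ) := by
  refine ⟨SLie n, ?_, ?_⟩
  · ext M
    show M ∈ T n ↔ _
    rw [mem_T_iff]
    rfl
  · have hmem : ∀ c : ι n → ℂ, gamLin n c ∈ T n := by
      intro c
      rw [mem_T_iff]
      exact ⟨gam_mem_sp n c, gam_col n c⟩
    let γ' : (ι n → ℂ) →ₗ[ℂ] T n := (gamLin n).codRestrict (T n) hmem
    have hbij : Function.Bijective γ' := by
      constructor
      · intro c d h
        have h2 : gam n c = gam n d := congrArg Subtype.val h
        rw [← pim_gam n c, ← pim_gam n d, h2]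
      · rintro ⟨M, hM⟩
        rw [mem_T_iff] at hM
        exact ⟨pim n M, Subtype.ext (gam_pim n M hM.1 hM.2)⟩
    have e : (ι n → ℂ) ≃ₗ[ℂ] T n := LinearEquiv.ofBijective γ' hbij
    have hrk : Module.rank ℂ (T n) = Fintype.card (ι n) := by
      rw [← e.rank_eq, rank_fun']
    show Module.rank ℂ (T n) = _
    rw [hrk, card_ι]
end
end
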